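/- Let G be a connected graph of order m, let k ≥ 2, and let A be the transfer matrix of G with respect to a bijection φ. Then for all i,j ∈ {1,…,2^m−1}, the (i,j)-entry of A^{k−1} equals the number of sets C ∈ C_L(G×P_k) that intersect every column of G×P_k and satisfy C∩I_1 = {(p,v_1) : p∈φ(i)} and C∩I_k = {(q,v_k) : q∈φ(j)}. Consequently 1^T·A^{k−1}·1 equals the number of sets in C_L(G×P_k) that intersect every column of G×P_k. -/

import Mathlib

open SimpleGraph Finset
open scoped Classical

/-- A connected set of a graph: a nonempty vertex subset inducing a connected subgraph. -/
def IsConnSet {V : Type*} (G : SimpleGraph V) (C : Finset V) : Prop :=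
  C.Nonempty ∧ (G.induce (C : Set V)).Connected

/-- `N(G)`: the number of connected sets of `G`. -/
noncomputable def numConnSets {V : Type*} (G : SimpleGraph V) : ℕ :=
  {C : Finset V | IsConnSet G C}.ncard

/-- Membership in `C_L(G×P_n)`: a connected set `C` of `G×P_n` such that for any two
consecutive columns `X, Y` with `C∩X ≠ ∅` and `C∩Y ≠ ∅`, the set `C∩(X∪Y)` is a connected
set of `G×P_n`. -/
def IsCLSet {V : Type*} (G : SimpleGraph V) (n : ℕ) (C : Finset (V × Fin n)) : Prop :=
  IsConnSet (G □ pathGraph n) C ∧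
  ∀ j j' : Fin n, (pathGraph n).Adj j j' →
    (C.filter (fun p => p.2 = j)).Nonempty →
    (C.filter (fun p => p.2 = j')).Nonempty →
    IsConnSet (G □ pathGraph n) (C.filter (fun p => p.2 = j ∨ p.2 = j'))

/-- `N_L(G×P_n) = |C_L(G×P_n)|`. -/
noncomputable def NL {V : Type*} (G : SimpleGraph V) (n : ℕ) : ℕ :=
  {C : Finset (V × Fin n) | IsCLSet G n C}.ncard

/-! ### Auxiliary lemmas -/

lemma isConnSet_iff' {V : Type*} (G : SimpleGraph V) (C : Finset V) :
    IsConnSet G C ↔ (G.induce (C : Set V)).Connected := by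
  constructor
  · exact fun h => h.2
  · intro h
    refine ⟨?_, h⟩
    obtain ⟨⟨x, hx⟩⟩ := h.nonempty
    exact ⟨x, by exact_mod_cast hx⟩

lemma induce_connected_congr {V W : Type*} (G : SimpleGraph V) (H : SimpleGraph W)
    (s : Set V) (f : V → W) (hinj : Function.Injective f)
    (hadj : ∀ a b : V, G.Adj a b ↔ H.Adj (f a) (f b)) :
    (G.induce s).Connected ↔ (H.induce (f '' s)).Connected := by
  have hbij : Set.BijOn f s (f '' s) := ⟨Set.mapsTo_image f s, hinj.injOn, Set.surjOn_image f s⟩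
  let e : s ≃ (f '' s) := hbij.equiv f
  have hiso : ∀ a b : s, (G.induce s).Adj a b ↔ (H.induce (f '' s)).Adj (e a) (e b) := by
    intro a b
    simp only [comap_adj, Function.Embedding.coe_subtype, induce]
    exact hadj a b
  constructor
  · intro h
    exact h.map ⟨e, fun {a b} hab => (hiso a b).1 hab⟩ e.surjective
  · intro h
    exact h.map ⟨e.symm, fun {a b} hab => by
      have := (hiso (e.symm a) (e.symm b)).2
      simp only [Equiv.apply_symm_apply] at this
      exact this hab⟩ e.symm.surjective

lemma pow_count {ι : Type*} [Fintype ι] [DecidableEq ι] (A : Matrix ι ι ℕ) :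
    ∀ (n : ℕ) (i j : ι), (A ^ n) i j =
      ∑ f : Fin (n+1) → ι,
        if f 0 = i ∧ f (Fin.last n) = j then ∏ l : Fin n, A (f l.castSucc) (f l.succ) else 0 := by
  intro n
  induction n with
  | zero =>
    intro i j
    rw [pow_zero]
    have h1 : (∑ f : Fin 1 → ι,
        if f 0 = i ∧ f (Fin.last 0) = j then ∏ l : Fin 0, A (f l.castSucc) (f l.succ) else 0)
        = ∑ x : ι, if x = i ∧ x = j then 1 else 0 := by
      exact Fintype.sum_equiv (Equiv.funUnique (Fin 1) ι) _
        (fun x => if x = i ∧ x = j then 1 else 0) (fun f => by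
          simp [Equiv.funUnique, Fin.last])
    rw [h1]
    by_cases h : i = j
    · subst h
      simp [Matrix.one_apply]
    · rw [Matrix.one_apply_ne h]
      refine (Finset.sum_eq_zero ?_).symm
      intro x _
      rw [if_neg]
      rintro ⟨rfl, rfl⟩
      exact h rfl
  | succ n ih =>
    intro i j
    rw [pow_succ, Matrix.mul_apply]
    have lhs_eq : (∑ x, (A ^ n) i x * A x j)
        = ∑ g : Fin (n+1) → ι, if g 0 = i then
            (∏ l : Fin n, A (g l.castSucc) (g l.succ)) * A (g (Fin.last n)) j else 0 := by
      simp_rw [ih, Finset.sum_mul]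
      rw [Finset.sum_comm]
      apply Finset.sum_congr rfl
      intro g _
      by_cases h : g 0 = i
      · simp only [h, true_and, ite_mul, zero_mul]
        rw [Finset.sum_ite_eq univ (g (Fin.last n))
          (fun x => (∏ l : Fin n, A (g l.castSucc) (g l.succ)) * A x j)]
        simp
      · simp [h]
    rw [lhs_eq]
    have rhs_eq : (∑ f : Fin (n+2) → ι,
        if f 0 = i ∧ f (Fin.last (n+1)) = j then ∏ l : Fin (n+1), A (f l.castSucc) (f l.succ) else 0)
        = ∑ g : Fin (n+1) → ι, if g 0 = i then
            (∏ l : Fin n, A (g l.castSucc) (g l.succ)) * A (g (Fin.last n)) j else 0 := by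
      rw [← Fintype.sum_equiv (Fin.snocEquiv (fun _ : Fin (n+2) => ι)) _
        (fun f : Fin (n+2) → ι => if f 0 = i ∧ f (Fin.last (n+1)) = j
          then ∏ l : Fin (n+1), A (f l.castSucc) (f l.succ) else 0) (fun p => rfl)]
      rw [Fintype.sum_prod_type]
      have hsnoc : ∀ (x : ι) (g : Fin (n+1) → ι),
          (Fin.snocEquiv (fun _ : Fin (n+2) => ι) (x, g) : Fin (n+2) → ι) = Fin.snoc g x := by
        intro x g; rfl
      have step : ∀ (x : ι) (g : Fin (n+1) → ι),
          (if (Fin.snoc g x : Fin (n+2) → ι) 0 = i ∧ (Fin.snoc g x : Fin (n+2) → ι) (Fin.last (n+1)) = j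
            then ∏ l : Fin (n+1), A ((Fin.snoc g x : Fin (n+2) → ι) l.castSucc)
              ((Fin.snoc g x : Fin (n+2) → ι) l.succ) else 0)
          = if g 0 = i ∧ x = j then (∏ l : Fin n, A (g l.castSucc) (g l.succ)) * A (g (Fin.last n)) x
            else 0 := by
        intro x g
        have h0 : (Fin.snoc g x : Fin (n+2) → ι) 0 = g 0 := by
          rw [← Fin.castSucc_zero, Fin.snoc_castSucc]
        have hlast : (Fin.snoc g x : Fin (n+2) → ι) (Fin.last (n+1)) = x := Fin.snoc_last _ _
        have hprod : (∏ l : Fin (n+1), A ((Fin.snoc g x : Fin (n+2) → ι) l.castSucc)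
            ((Fin.snoc g x : Fin (n+2) → ι) l.succ))
            = (∏ l : Fin n, A (g l.castSucc) (g l.succ)) * A (g (Fin.last n)) x := by
          rw [Fin.prod_univ_castSucc]
          congr 1
          · apply Finset.prod_congr rfl
            intro l _
            rw [Fin.succ_castSucc, Fin.snoc_castSucc, Fin.snoc_castSucc]
          · rw [Fin.succ_last, Fin.snoc_castSucc, Fin.snoc_last]
        rw [h0, hlast, hprod]
      simp_rw [hsnoc, step]
      rw [Finset.sum_comm]
      apply Finset.sum_congr rfl
      intro g _
      by_cases h : g 0 = i
      · simp only [h, true_and, ite_mul, zero_mul]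
        have heq : ∀ x : ι,
            (if x = j then (∏ l : Fin n, A (g l.castSucc) (g l.succ)) * A (g (Fin.last n)) x else 0)
            = if j = x then (∏ l : Fin n, A (g l.castSucc) (g l.succ)) * A (g (Fin.last n)) x else 0 := by
          intro x; congr 1; simp [eq_comm]
        simp_rw [heq]
        rw [Finset.sum_ite_eq univ j
          (fun x => (∏ l : Fin n, A (g l.castSucc) (g l.succ)) * A (g (Fin.last n)) x)]
        simp
      · simp [h]
    rw [rhs_eq]

lemma conn_shift {m : ℕ} (G : SimpleGraph (Fin m)) (S T : Finset (Fin m))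
    (k l : ℕ) (hl : l + 1 < k) :
    IsConnSet (G □ pathGraph k)
      (S.image (fun p => (p, (⟨l, by omega⟩ : Fin k))) ∪
        T.image (fun q => (q, (⟨l+1, by omega⟩ : Fin k)))) ↔
    IsConnSet (G □ pathGraph 2)
      (S.image (fun p => (p, (0 : Fin 2))) ∪ T.image (fun q => (q, (1 : Fin 2)))) := by
  have hk : 2 ≤ k := by omega
  set h : Fin m × Fin 2 → Fin m × Fin k :=
    fun p => (p.1, (⟨l + p.2.1, by omega⟩ : Fin k)) with hh
  have hinj : Function.Injective h := by
    rintro ⟨p, t⟩ ⟨q, u⟩ hpq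
    have h1 : p = q := congrArg Prod.fst hpq
    have h2 : l + t.1 = l + u.1 := congrArg (fun x : Fin m × Fin k => x.2.1) hpq
    have h3 : t = u := Fin.ext (by omega)
    exact Prod.ext h1 h3
  have hadj : ∀ a b : Fin m × Fin 2, (G □ pathGraph 2).Adj a b ↔ (G □ pathGraph k).Adj (h a) (h b) := by
    rintro ⟨p, t⟩ ⟨q, u⟩
    simp only [boxProd_adj, pathGraph_adj, hh, Fin.mk.injEq, Fin.ext_iff]
    constructor
    · rintro (⟨hpq, ht⟩ | ⟨ht, hpq⟩)
      · exact Or.inl ⟨hpq, by omega⟩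
      · exact Or.inr ⟨by omega, hpq⟩
    · rintro (⟨hpq, ht⟩ | ⟨ht, hpq⟩)
      · exact Or.inl ⟨hpq, by omega⟩
      · refine Or.inr ⟨?_, hpq⟩
        have h2 : t.1 < 2 := t.2
        have h2' : u.1 < 2 := u.2
        omega
  have himg : ((S.image (fun p => (p, (⟨l, by omega⟩ : Fin k))) ∪
        T.image (fun q => (q, (⟨l+1, by omega⟩ : Fin k)))) : Finset (Fin m × Fin k))
      = (S.image (fun p => (p, (0 : Fin 2))) ∪ T.image (fun q => (q, (1 : Fin 2)))).image h := by
    rw [Finset.image_union, Finset.image_image, Finset.image_image]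
    congr 1
    all_goals (apply Finset.image_congr; intro x _; simp [hh])
  rw [isConnSet_iff', isConnSet_iff', himg, Finset.coe_image]
  exact (induce_connected_congr (G □ pathGraph 2) (G □ pathGraph k) _ h hinj hadj).symm

/-! ### Column structure -/

/-- The set of `G`-vertices appearing in column `l` of `C`. -/
def colS {m k : ℕ} (C : Finset (Fin m × Fin k)) (l : Fin k) : Finset (Fin m) :=
  (C.filter (fun p => p.2 = l)).image Prod.fst

/-- The subset of `G×P_k` determined by a sequence of column sets. -/
noncomputable def Cof {m k : ℕ} (φ : Fin (2^m-1) ≃ {S : Finset (Fin m) // S.Nonempty})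
    (f : Fin k → Fin (2^m-1)) : Finset (Fin m × Fin k) :=
  Finset.univ.filter (fun p => p.1 ∈ (φ (f p.2)).1)

lemma filter_eq_image {m k : ℕ} (C : Finset (Fin m × Fin k)) (l : Fin k) :
    C.filter (fun p => p.2 = l) = (colS C l).image (fun p => (p, l)) := by
  ext ⟨p, t⟩
  simp only [Finset.mem_filter, colS, Finset.mem_image, Prod.mk.injEq]
  constructor
  · rintro ⟨hp, rfl⟩
    exact ⟨p, ⟨⟨p, t⟩, ⟨hp, rfl⟩, rfl⟩, rfl, rfl⟩
  · rintro ⟨q, ⟨⟨a, b⟩, ⟨hab, rfl⟩, rfl⟩, rfl, rfl⟩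
    exact ⟨hab, rfl⟩

lemma mem_Cof {m k : ℕ} (φ : Fin (2^m-1) ≃ {S : Finset (Fin m) // S.Nonempty})
    (f : Fin k → Fin (2^m-1)) (p : Fin m × Fin k) :
    p ∈ Cof φ f ↔ p.1 ∈ (φ (f p.2)).1 := by
  simp [Cof]

lemma filter_Cof {m k : ℕ} (φ : Fin (2^m-1) ≃ {S : Finset (Fin m) // S.Nonempty})
    (f : Fin k → Fin (2^m-1)) (l : Fin k) :
    (Cof φ f).filter (fun p => p.2 = l) = (φ (f l)).1.image (fun p => (p, l)) := by
  ext ⟨p, t⟩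
  simp only [Finset.mem_filter, mem_Cof, Finset.mem_image, Prod.mk.injEq]
  constructor
  · rintro ⟨hp, rfl⟩
    exact ⟨p, hp, rfl, rfl⟩
  · rintro ⟨q, hq, rfl, rfl⟩
    exact ⟨hq, rfl⟩

lemma colS_Cof {m k : ℕ} (φ : Fin (2^m-1) ≃ {S : Finset (Fin m) // S.Nonempty})
    (f : Fin k → Fin (2^m-1)) (l : Fin k) :
    colS (Cof φ f) l = (φ (f l)).1 := by
  rw [colS, filter_Cof, Finset.image_image]
  ext p
  simp

lemma Cof_inj {m k : ℕ} (φ : Fin (2^m-1) ≃ {S : Finset (Fin m) // S.Nonempty}) :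
    Function.Injective (Cof (k := k) φ) := by
  intro f g hfg
  funext l
  have := colS_Cof φ f l
  rw [hfg, colS_Cof φ g l] at this
  exact φ.injective (Subtype.ext this.symm)

lemma eq_Cof {m k : ℕ} (φ : Fin (2^m-1) ≃ {S : Finset (Fin m) // S.Nonempty})
    (C : Finset (Fin m × Fin k)) (hne : ∀ l, (colS C l).Nonempty) :
    C = Cof φ (fun l => φ.symm ⟨colS C l, hne l⟩) := by
  ext ⟨p, t⟩
  rw [mem_Cof]
  simp only [Equiv.apply_symm_apply]
  simp only [colS, Finset.mem_image, Finset.mem_filter]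
  constructor
  · intro hp
    exact ⟨⟨p, t⟩, ⟨hp, rfl⟩, rfl⟩
  · rintro ⟨⟨a, b⟩, ⟨hab, rfl⟩, rfl⟩
    exact hab

lemma filter_pair {m k : ℕ} (φ : Fin (2^m-1) ≃ {S : Finset (Fin m) // S.Nonempty})
    (f : Fin k → Fin (2^m-1)) (j j' : Fin k) :
    (Cof φ f).filter (fun p => p.2 = j ∨ p.2 = j')
      = (φ (f j)).1.image (fun p => (p, j)) ∪ (φ (f j')).1.image (fun p => (p, j')) := by
  rw [Finset.filter_or, filter_Cof, filter_Cof]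
lemma main_equiv {m n : ℕ} (G : SimpleGraph (Fin m))
    (φ : Fin (2^m-1) ≃ {S : Finset (Fin m) // S.Nonempty})
    (A : Matrix (Fin (2^m-1)) (Fin (2^m-1)) ℕ)
    (hA : ∀ i j, A i j = if IsConnSet (G □ pathGraph 2)
          ((φ i).1.image (fun p => (p, (0 : Fin 2))) ∪ (φ j).1.image (fun q => (q, (1 : Fin 2))))
      then 1 else 0)
    (f : Fin (n+2) → Fin (2^m-1)) :
    IsCLSet G (n+2) (Cof φ f) ↔ ∀ l : Fin (n+1), A (f l.castSucc) (f l.succ) = 1 := by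
  have hA1 : ∀ i j, (A i j = 1 ↔ IsConnSet (G □ pathGraph 2)
      ((φ i).1.image (fun p => (p, (0 : Fin 2))) ∪ (φ j).1.image (fun q => (q, (1 : Fin 2))))) := by
    intro i j
    rw [hA]
    by_cases hc : IsConnSet (G □ pathGraph 2)
      ((φ i).1.image (fun p => (p, (0 : Fin 2))) ∪ (φ j).1.image (fun q => (q, (1 : Fin 2))))
    · simp [hc]
    · simp [hc]
  have colNe : ∀ (g : Fin (n+2) → Fin (2^m-1)) (l : Fin (n+2)),
      ((Cof φ g).filter (fun p => p.2 = l)).Nonempty := by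
    intro g l
    rw [filter_Cof]
    exact ((φ (g l)).2).image _
  have hD : ∀ l : Fin (n+1), (A (f l.castSucc) (f l.succ) = 1 ↔
      IsConnSet (G □ pathGraph (n+2))
        ((φ (f l.castSucc)).1.image (fun p => (p, (l.castSucc : Fin (n+2)))) ∪
          (φ (f l.succ)).1.image (fun q => (q, (l.succ : Fin (n+2)))))) := by
    intro l
    rw [hA1]
    exact (conn_shift G (φ (f l.castSucc)).1 (φ (f l.succ)).1 (n+2) l.1 (by omega)).symm
  constructor
  · rintro ⟨hconn, hpair⟩ l
    have hadj : (pathGraph (n+2)).Adj l.castSucc l.succ := by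
      rw [pathGraph_adj]
      left
      simp
    have h3 := hpair l.castSucc l.succ hadj (colNe f _) (colNe f _)
    rw [filter_pair] at h3
    rw [hD]
    exact h3
  · intro hf
    have hDconn : ∀ l : Fin (n+1), IsConnSet (G □ pathGraph (n+2))
        ((φ (f l.castSucc)).1.image (fun p => (p, (l.castSucc : Fin (n+2)))) ∪
          (φ (f l.succ)).1.image (fun q => (q, (l.succ : Fin (n+2))))) :=
      fun l => (hD l).1 (hf l)
    constructor
    · rw [isConnSet_iff']
      have key : ∀ r : ℕ, r ≤ n →
          ((G □ pathGraph (n+2)).induce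
            (((Cof φ f).filter (fun p => p.2.1 ≤ r + 1) : Finset _) : Set _)).Connected := by
        intro r
        induction r with
        | zero =>
          intro _
          have e0 : (Cof φ f).filter (fun p => p.2.1 ≤ 0 + 1)
              = (Cof φ f).filter (fun p =>
                  p.2 = ((0 : Fin (n+1)).castSucc : Fin (n+2)) ∨ p.2 = ((0 : Fin (n+1)).succ : Fin (n+2))) := by
            apply Finset.filter_congr
            intro p _
            simp only [Fin.ext_iff, Fin.coe_castSucc, Fin.val_succ, Fin.val_zero]
            constructor
            · intro h; omega
            · intro h; omega
          rw [e0, filter_pair]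
          exact (isConnSet_iff' _ _).1 (hDconn 0)
        | succ r ih =>
          intro hr
          have hrn : r ≤ n := by omega
          have hl : r + 1 < n + 1 := by omega
          have e1 : (Cof φ f).filter (fun p => p.2.1 ≤ r + 1 + 1)
              = (Cof φ f).filter (fun p => p.2.1 ≤ r + 1) ∪
                (Cof φ f).filter (fun p =>
                  p.2 = ((⟨r+1, hl⟩ : Fin (n+1)).castSucc : Fin (n+2)) ∨
                  p.2 = ((⟨r+1, hl⟩ : Fin (n+1)).succ : Fin (n+2))) := by
            rw [← Finset.filter_or]
            apply Finset.filter_congr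
            intro p hp
            simp only [Fin.ext_iff, Fin.coe_castSucc, Fin.val_succ]
            have := p.2.2
            constructor
            · intro h; omega
            · intro h; omega
          rw [e1, Finset.coe_union]
          refine induce_union_connected (ih hrn).preconnected ?_ ?_
          · rw [filter_pair]
            exact ((isConnSet_iff' _ _).1 (hDconn ⟨r+1, hl⟩)).preconnected
          · obtain ⟨p0, hp0⟩ := (φ (f ((⟨r+1, hl⟩ : Fin (n+1)).castSucc))).2
            refine ⟨(p0, ((⟨r+1, hl⟩ : Fin (n+1)).castSucc : Fin (n+2))), ?_, ?_⟩
            · rw [Finset.mem_coe, Finset.mem_filter]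
              refine ⟨(mem_Cof φ f _).2 hp0, ?_⟩
              simp
            · rw [Finset.mem_coe, Finset.mem_filter]
              exact ⟨(mem_Cof φ f _).2 hp0, Or.inl rfl⟩
      have efin : (Cof φ f) = (Cof φ f).filter (fun p => p.2.1 ≤ n + 1) := by
        rw [Finset.filter_true_of_mem]
        intro p _
        have := p.2.2
        omega
      rw [efin]
      exact key n le_rfl
    · intro j j' hadj hne hne'
      rw [pathGraph_adj] at hadj
      rcases hadj with hc | hc
      · have hjl : j.1 < n + 1 := by omega
        have hj : j = ((⟨j.1, hjl⟩ : Fin (n+1)).castSucc : Fin (n+2)) := Fin.ext rfl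
        have hj' : j' = ((⟨j.1, hjl⟩ : Fin (n+1)).succ : Fin (n+2)) := Fin.ext (by
          simp only [Fin.val_succ]
          omega)
        rw [hj, hj', filter_pair]
        exact hDconn ⟨j.1, hjl⟩
      · have hjl : j'.1 < n + 1 := by omega
        have hj' : j' = ((⟨j'.1, hjl⟩ : Fin (n+1)).castSucc : Fin (n+2)) := Fin.ext rfl
        have hj : j = ((⟨j'.1, hjl⟩ : Fin (n+1)).succ : Fin (n+2)) := Fin.ext (by
          simp only [Fin.val_succ]
          omega)
        have swap : (Cof φ f).filter (fun p => p.2 = j ∨ p.2 = j')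
            = (Cof φ f).filter (fun p => p.2 = j' ∨ p.2 = j) := by
          apply Finset.filter_congr
          intro p _
          constructor
          · exact Or.symm
          · exact Or.symm
        rw [swap]
        have e2 : (Cof φ f).filter (fun p => p.2 = j' ∨ p.2 = j)
            = (Cof φ f).filter (fun p =>
                p.2 = ((⟨j'.1, hjl⟩ : Fin (n+1)).castSucc : Fin (n+2)) ∨
                p.2 = ((⟨j'.1, hjl⟩ : Fin (n+1)).succ : Fin (n+2))) := by
          apply Finset.filter_congr
          intro p _
          rw [← hj', ← hj]
        rw [e2, filter_pair]
        exact hDconn ⟨j'.1, hjl⟩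

/-- For a connected graph `G` of order `m`, `k ≥ 2`, and the transfer
matrix `A` of `G` with respect to a bijection `φ`: the `(i,j)`-entry of `A^{k−1}` counts
the sets in `C_L(G×P_k)` meeting every column with `C∩I_1 = φ(i)×{v_1}` and
`C∩I_k = φ(j)×{v_k}`; consequently `1ᵀ·A^{k−1}·1` counts the sets in `C_L(G×P_k)`
meeting every column. -/
theorem statement4 {m : ℕ} (G : SimpleGraph (Fin m)) (hG : G.Connected)
    (k : ℕ) (hk : 2 ≤ k)
    (φ : Fin (2 ^ m - 1) ≃ {S : Finset (Fin m) // S.Nonempty})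
    (A : Matrix (Fin (2 ^ m - 1)) (Fin (2 ^ m - 1)) ℕ)
    (hA : ∀ i j, A i j =
      if IsConnSet (G □ pathGraph 2)
          ((φ i).1.image (fun p => (p, (0 : Fin 2))) ∪
            (φ j).1.image (fun q => (q, (1 : Fin 2))))
      then 1 else 0) :
    (∀ i j, (A ^ (k - 1)) i j =
      {C : Finset (Fin m × Fin k) | IsCLSet G k C ∧
        (∀ l : Fin k, (C.filter (fun p => p.2 = l)).Nonempty) ∧
        C.filter (fun p => p.2 = (⟨0, by omega⟩ : Fin k)) =
          (φ i).1.image (fun p => (p, (⟨0, by omega⟩ : Fin k))) ∧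
        C.filter (fun p => p.2 = (⟨k - 1, by omega⟩ : Fin k)) =
          (φ j).1.image (fun q => (q, (⟨k - 1, by omega⟩ : Fin k)))}.ncard) ∧
    (∑ i, ∑ j, (A ^ (k - 1)) i j) =
      {C : Finset (Fin m × Fin k) | IsCLSet G k C ∧
        ∀ l : Fin k, (C.filter (fun p => p.2 = l)).Nonempty}.ncard := by
  obtain ⟨n, rfl⟩ : ∃ n, k = n + 2 := ⟨k - 2, by omega⟩
  have hk1 : n + 2 - 1 = n + 1 := rfl
  have e0 : ∀ (h : (0:ℕ) < n + 2), (⟨0, h⟩ : Fin (n+2)) = 0 := fun h => Fin.ext (by simp)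
  have elast : ∀ (h : n + 2 - 1 < n + 2), (⟨n + 2 - 1, h⟩ : Fin (n+2)) = Fin.last (n+1) :=
    fun h => Fin.ext (by simp)
  have hA01 : ∀ a b, A a b = 0 ∨ A a b = 1 := by
    intro a b
    rw [hA]
    by_cases hc : IsConnSet (G □ pathGraph 2)
        ((φ a).1.image (fun p => (p, (0 : Fin 2))) ∪ (φ b).1.image (fun q => (q, (1 : Fin 2))))
    · right; rw [if_pos hc]
    · left; rw [if_neg hc]
  -- counting formula for matrix powers
  have hcount : ∀ i j, (A ^ (n+1)) i j
      = (Finset.univ.filter (fun f : Fin (n+2) → Fin (2^m-1) =>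
          f 0 = i ∧ f (Fin.last (n+1)) = j ∧
          ∀ l : Fin (n+1), A (f l.castSucc) (f l.succ) = 1)).card := by
    intro i j
    rw [pow_count, Finset.card_filter]
    apply Finset.sum_congr rfl
    intro f _
    by_cases h01 : f 0 = i ∧ f (Fin.last (n+1)) = j
    · by_cases hall : ∀ l : Fin (n+1), A (f l.castSucc) (f l.succ) = 1
      · rw [if_pos h01, if_pos ⟨h01.1, h01.2, hall⟩]
        exact Finset.prod_eq_one (fun l _ => hall l)
      · rw [if_pos h01, if_neg (by tauto)]
        push_neg at hall
        obtain ⟨l, hl⟩ := hall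
        rcases hA01 (f l.castSucc) (f l.succ) with h0 | h1
        · exact Finset.prod_eq_zero (Finset.mem_univ l) h0
        · exact absurd h1 hl
    · rw [if_neg h01, if_neg (by tauto)]
  -- boundary condition reformulation
  have bound_iff : ∀ (C : Finset (Fin m × Fin (n+2))) (l : Fin (n+2)) (i : Fin (2^m-1)),
      (C.filter (fun p => p.2 = l) = (φ i).1.image (fun p => (p, l)) ↔ colS C l = (φ i).1) := by
    intro C l i
    constructor
    · intro h
      rw [colS, h, Finset.image_image]
      ext p
      simp
    · intro h
      rw [filter_eq_image, h]
  have colne_iff : ∀ (C : Finset (Fin m × Fin (n+2))) (l : Fin (n+2)),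
      (colS C l).Nonempty ↔ (C.filter (fun p => p.2 = l)).Nonempty := by
    intro C l
    exact Finset.image_nonempty
  -- the key set identity
  have claim : ∀ i j, {C : Finset (Fin m × Fin (n+2)) | IsCLSet G (n+2) C ∧
        (∀ l : Fin (n+2), (C.filter (fun p => p.2 = l)).Nonempty) ∧
        C.filter (fun p => p.2 = (0 : Fin (n+2))) =
          (φ i).1.image (fun p => (p, (0 : Fin (n+2)))) ∧
        C.filter (fun p => p.2 = Fin.last (n+1)) =
          (φ j).1.image (fun q => (q, Fin.last (n+1)))}
      = Cof φ '' {f : Fin (n+2) → Fin (2^m-1) |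
          f 0 = i ∧ f (Fin.last (n+1)) = j ∧
          ∀ l : Fin (n+1), A (f l.castSucc) (f l.succ) = 1} := by
    intro i j
    ext C
    constructor
    · rintro ⟨hCL, hne, h0, hlast⟩
      have hcolne : ∀ l, (colS C l).Nonempty := fun l => (colne_iff C l).2 (hne l)
      refine ⟨fun l => φ.symm ⟨colS C l, hcolne l⟩, ⟨?_, ?_, ?_⟩, (eq_Cof φ C hcolne).symm⟩
      · have : colS C 0 = (φ i).1 := (bound_iff C 0 i).1 h0
        simp only [this]
        exact φ.symm_apply_apply i
      · have : colS C (Fin.last (n+1)) = (φ j).1 := (bound_iff C _ j).1 hlast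
        simp only [this]
        exact φ.symm_apply_apply j
      · have hC : C = Cof φ (fun l => φ.symm ⟨colS C l, hcolne l⟩) := eq_Cof φ C hcolne
        exact (main_equiv G φ A hA _).1 (hC ▸ hCL)
    · rintro ⟨f, ⟨hf0, hflast, hfA⟩, rfl⟩
      refine ⟨(main_equiv G φ A hA f).2 hfA, ?_, ?_, ?_⟩
      · intro l
        rw [filter_Cof]
        exact ((φ (f l)).2).image _
      · rw [filter_Cof, hf0]
      · rw [filter_Cof, hflast]
  -- ncard of the C-sets
  have hset : ∀ i j, {C : Finset (Fin m × Fin (n+2)) | IsCLSet G (n+2) C ∧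
        (∀ l : Fin (n+2), (C.filter (fun p => p.2 = l)).Nonempty) ∧
        C.filter (fun p => p.2 = (0 : Fin (n+2))) =
          (φ i).1.image (fun p => (p, (0 : Fin (n+2)))) ∧
        C.filter (fun p => p.2 = Fin.last (n+1)) =
          (φ j).1.image (fun q => (q, Fin.last (n+1)))}.ncard
      = (A ^ (n+1)) i j := by
    intro i j
    rw [claim i j, Set.ncard_image_of_injective _ (Cof_inj φ)]
    have hfin : {f : Fin (n+2) → Fin (2^m-1) |
          f 0 = i ∧ f (Fin.last (n+1)) = j ∧
          ∀ l : Fin (n+1), A (f l.castSucc) (f l.succ) = 1}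
        = ↑(Finset.univ.filter (fun f : Fin (n+2) → Fin (2^m-1) =>
            f 0 = i ∧ f (Fin.last (n+1)) = j ∧
            ∀ l : Fin (n+1), A (f l.castSucc) (f l.succ) = 1)) := by
      ext f
      simp
    rw [hfin, Set.ncard_coe_finset, hcount i j]
  have hpow : A ^ (n + 2 - 1) = A ^ (n + 1) := rfl
  constructor
  · intro i j
    rw [hpow]
    simp only [e0, elast]
    exact (hset i j).symm
  · rw [hpow]
    -- totals
    have hι : Nonempty (Fin (2^m-1)) := by
      obtain ⟨x⟩ := hG.nonempty
      exact ⟨φ.symm ⟨{x}, Finset.singleton_nonempty x⟩⟩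
    set κ : Finset (Fin m × Fin (n+2)) → (Fin (2^m-1)) × (Fin (2^m-1)) := fun C =>
      if h : ∀ l, (colS C l).Nonempty then
        (φ.symm ⟨colS C 0, h 0⟩, φ.symm ⟨colS C (Fin.last (n+1)), h _⟩)
      else Classical.arbitrary _ with hκ
    have htot : {C : Finset (Fin m × Fin (n+2)) | IsCLSet G (n+2) C ∧
          ∀ l : Fin (n+2), (C.filter (fun p => p.2 = l)).Nonempty}
        = ↑(Finset.univ.filter (fun C : Finset (Fin m × Fin (n+2)) =>
            IsCLSet G (n+2) C ∧ ∀ l : Fin (n+2), (C.filter (fun p => p.2 = l)).Nonempty)) := by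
      ext C; simp
    rw [htot, Set.ncard_coe_finset]
    rw [Finset.card_eq_sum_card_fiberwise (f := κ) (t := Finset.univ) (fun C _ => Finset.mem_univ _)]
    rw [Fintype.sum_prod_type]
    apply Finset.sum_congr rfl
    intro i _
    apply Finset.sum_congr rfl
    intro j _
    rw [← hset i j]
    have hfib : (Finset.univ.filter (fun C : Finset (Fin m × Fin (n+2)) =>
            IsCLSet G (n+2) C ∧ ∀ l : Fin (n+2), (C.filter (fun p => p.2 = l)).Nonempty)).filter
          (fun C => κ C = (i, j))
        = Finset.univ.filter (fun C : Finset (Fin m × Fin (n+2)) => IsCLSet G (n+2) C ∧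
            (∀ l : Fin (n+2), (C.filter (fun p => p.2 = l)).Nonempty) ∧
            C.filter (fun p => p.2 = (0 : Fin (n+2))) =
              (φ i).1.image (fun p => (p, (0 : Fin (n+2)))) ∧
            C.filter (fun p => p.2 = Fin.last (n+1)) =
              (φ j).1.image (fun q => (q, Fin.last (n+1)))) := by
      ext C
      simp only [Finset.mem_filter, Finset.mem_univ, true_and]
      constructor
      · rintro ⟨⟨hCL, hne⟩, hκC⟩
        have hcolne : ∀ l, (colS C l).Nonempty := fun l => (colne_iff C l).2 (hne l)
        rw [hκ] at hκC
        simp only [dif_pos hcolne] at hκC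
        have h1 : φ.symm ⟨colS C 0, hcolne 0⟩ = i := congrArg Prod.fst hκC
        have h2 : φ.symm ⟨colS C (Fin.last (n+1)), hcolne _⟩ = j := congrArg Prod.snd hκC
        have hc0 : colS C 0 = (φ i).1 := by rw [← h1, Equiv.apply_symm_apply]
        have hcl : colS C (Fin.last (n+1)) = (φ j).1 := by rw [← h2, Equiv.apply_symm_apply]
        exact ⟨hCL, hne, (bound_iff C 0 i).2 hc0, (bound_iff C _ j).2 hcl⟩
      · rintro ⟨hCL, hne, h0, hlast⟩
        have hcolne : ∀ l, (colS C l).Nonempty := fun l => (colne_iff C l).2 (hne l)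
        refine ⟨⟨hCL, hne⟩, ?_⟩
        rw [hκ]
        simp only [dif_pos hcolne]
        have hc0 : colS C 0 = (φ i).1 := (bound_iff C 0 i).1 h0
        have hcl : colS C (Fin.last (n+1)) = (φ j).1 := (bound_iff C _ j).1 hlast
        simp only [hc0, hcl]
        rw [Prod.mk.injEq]
        exact ⟨φ.symm_apply_apply i, φ.symm_apply_apply j⟩
    rw [hfib]
    have : {C : Finset (Fin m × Fin (n+2)) | IsCLSet G (n+2) C ∧
        (∀ l : Fin (n+2), (C.filter (fun p => p.2 = l)).Nonempty) ∧
        C.filter (fun p => p.2 = (0 : Fin (n+2))) =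
          (φ i).1.image (fun p => (p, (0 : Fin (n+2)))) ∧
        C.filter (fun p => p.2 = Fin.last (n+1)) =
          (φ j).1.image (fun q => (q, Fin.last (n+1)))}
        = ↑(Finset.univ.filter (fun C : Finset (Fin m × Fin (n+2)) => IsCLSet G (n+2) C ∧
            (∀ l : Fin (n+2), (C.filter (fun p => p.2 = l)).Nonempty) ∧
            C.filter (fun p => p.2 = (0 : Fin (n+2))) =
              (φ i).1.image (fun p => (p, (0 : Fin (n+2)))) ∧
            C.filter (fun p => p.2 = Fin.last (n+1)) =
              (φ j).1.image (fun q => (q, Fin.last (n+1))))) := by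
      ext C; simp
    rw [this, Set.ncard_coe_finset]
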